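/- (Bound on the number of damped iterations) Let P : ℝⁿ → ℝᵐ be continuously differentiable, u⁰ ∈ ℝⁿ, s = ‖P(u⁰)‖_∞ > 0, and let μ, L > 0 and ρ > 0 satisfy: ‖P'(u)ᵀh‖_∞ ≥ μ‖h‖₁ for all h ∈ ℝᵐ and all u ∈ B_ρ = {u : ‖u − u⁰‖₁ ≤ ρ}; ‖(P'(a) − P'(b))v‖_∞ ≤ L‖a−b‖₁‖v‖₁ for all a, b ∈ B_ρ, v ∈ ℝⁿ; and ρ ≥ (μ/L)·(k_max + 2H₀(v̄/2)), where k_max = max{0, ⌈2Ls/μ²⌉ − 2} and v̄ = Ls/μ² − k_max/2. Then for every damped sparse-Newton sequence (uᵏ) from u⁰, the step-size γ_k = min{1, μ²/(L‖P(uᵏ)‖_∞)} equals 1 for all k ≥ k_max; i.e., the method makes at most k_max damped iterations, after which it performs pure Newton iterations. -/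

import Mathlib

open Filter Topology

/-- The ℓ1-norm on `ℝ^d`: `‖x‖₁ = Σᵢ |xᵢ|`. -/
noncomputable def l1Norm {d : ℕ} (x : Fin d → ℝ) : ℝ := ∑ i, |x i|

/-- The ℓ∞-norm on `ℝ^d`: `‖x‖_∞ = maxᵢ |xᵢ|`. -/
noncomputable def linfNorm {d : ℕ} (x : Fin d → ℝ) : ℝ := ⨆ i, |x i|

/-- `H₀(δ) = Σ_{ℓ=0}^∞ δ^(2^ℓ)`. -/
noncomputable def H0 (δ : ℝ) : ℝ := ∑' ℓ : ℕ, δ ^ (2 ^ ℓ)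

/-- The transpose of a continuous linear map `A : ℝⁿ → ℝᵐ` applied to `h ∈ ℝᵐ`:
`(Aᵀ h)ᵢ = Σⱼ Aⱼᵢ hⱼ` where `Aⱼᵢ = (A eᵢ)ⱼ`. -/
noncomputable def transposeApply {n m : ℕ} (A : (Fin n → ℝ) →L[ℝ] (Fin m → ℝ))
    (h : Fin m → ℝ) : Fin n → ℝ :=
  fun i => ∑ j, A (Pi.single i 1) j * h j

lemma l1Norm_nonneg {d : ℕ} (x : Fin d → ℝ) : 0 ≤ l1Norm x :=
  Finset.sum_nonneg fun _ _ => abs_nonneg _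

lemma l1Norm_smul {d : ℕ} (c : ℝ) (x : Fin d → ℝ) : l1Norm (c • x) = |c| * l1Norm x := by
  simp [l1Norm, abs_mul, Finset.mul_sum]

lemma l1Norm_add_le {d : ℕ} (x y : Fin d → ℝ) : l1Norm (x + y) ≤ l1Norm x + l1Norm y := by
  rw [l1Norm, l1Norm, l1Norm, ← Finset.sum_add_distrib]
  exact Finset.sum_le_sum fun i _ => abs_add_le _ _

lemma abs_le_l1Norm {d : ℕ} (x : Fin d → ℝ) (i : Fin d) : |x i| ≤ l1Norm x :=
  Finset.single_le_sum (fun j _ => abs_nonneg (x j)) (Finset.mem_univ i)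

lemma linfNorm_eq_norm {d : ℕ} (x : Fin d → ℝ) : linfNorm x = ‖x‖ := by
  apply le_antisymm
  · exact Real.iSup_le (fun i => by rw [← Real.norm_eq_abs]; exact norm_le_pi_norm x i)
      (norm_nonneg x)
  · rcases Nat.eq_zero_or_pos d with h | h
    · have : x = 0 := by subst h; exact Subsingleton.elim _ _
      simp [this, linfNorm]
    · haveI : Nonempty (Fin d) := Fin.pos_iff_nonempty.mp h
      rw [show (‖x‖ ≤ linfNorm x) ↔ _ from pi_norm_le_iff_of_nonneg
        (Real.iSup_nonneg fun i => abs_nonneg _)]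
      intro i
      rw [Real.norm_eq_abs, linfNorm]
      exact le_ciSup (Set.Finite.bddAbove (Set.finite_range fun j => |x j|)) i

lemma linfNorm_nonneg {d : ℕ} (x : Fin d → ℝ) : 0 ≤ linfNorm x := by
  rw [linfNorm_eq_norm]; exact norm_nonneg x

lemma abs_le_linfNorm {d : ℕ} (x : Fin d → ℝ) (i : Fin d) : |x i| ≤ linfNorm x := by
  rw [linfNorm]
  exact le_ciSup (Set.Finite.bddAbove (Set.finite_range fun j => |x j|)) i

lemma linfNorm_le_l1Norm {d : ℕ} (x : Fin d → ℝ) : linfNorm x ≤ l1Norm x :=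
  Real.iSup_le (fun i => abs_le_l1Norm x i) (l1Norm_nonneg x)

lemma l1Norm_eq_zero {d : ℕ} {x : Fin d → ℝ} (h : l1Norm x ≤ 0) : x = 0 := by
  funext i
  have := abs_le_l1Norm x i
  have : |x i| ≤ 0 := le_trans this h
  simpa [abs_nonpos_iff] using this

lemma pairing_le {d : ℕ} (h y : Fin d → ℝ) : ∑ j, h j * y j ≤ l1Norm h * linfNorm y := by
  calc ∑ j, h j * y j ≤ ∑ j, |h j| * linfNorm y := by
        refine Finset.sum_le_sum fun j _ => ?_
        calc h j * y j ≤ |h j * y j| := le_abs_self _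
          _ = |h j| * |y j| := abs_mul _ _
          _ ≤ |h j| * linfNorm y :=
            mul_le_mul_of_nonneg_left (abs_le_linfNorm y j) (abs_nonneg _)
    _ = l1Norm h * linfNorm y := by rw [l1Norm, ← Finset.sum_mul]


lemma continuous_l1Norm {d : ℕ} : Continuous (l1Norm (d := d)) := by
  unfold l1Norm
  exact continuous_finset_sum _ fun i _ => (continuous_apply i).abs

lemma exists_l1_solution {n m : ℕ} (A : (Fin n → ℝ) →L[ℝ] (Fin m → ℝ)) {μ : ℝ} (hμ : 0 < μ)
    (hA : ∀ h : Fin m → ℝ, μ * l1Norm h ≤ linfNorm (transposeApply A h))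
    (b : Fin m → ℝ) : ∃ v, A v = b ∧ l1Norm v ≤ linfNorm b / μ := by
  by_cases hb : b = 0
  · refine ⟨0, by simp [hb], ?_⟩
    have : l1Norm (0 : Fin n → ℝ) = 0 := by simp [l1Norm]
    rw [this]
    exact div_nonneg (linfNorm_nonneg b) hμ.le
  rcases Nat.eq_zero_or_pos n with hn | hn
  · exfalso
    have h1 := hA b
    have h2 : linfNorm (transposeApply A b) = 0 := by
      subst hn
      haveI : IsEmpty (Fin 0) := inferInstance
      rw [linfNorm]
      exact Real.iSup_of_isEmpty _
    obtain ⟨j, hj⟩ : ∃ j, b j ≠ 0 := by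
      by_contra hc
      push_neg at hc
      exact hb (funext hc)
    have h3 : 0 < l1Norm b := lt_of_lt_of_le (abs_pos.mpr hj) (abs_le_l1Norm b j)
    nlinarith
  haveI : Nonempty (Fin n) := Fin.pos_iff_nonempty.mp hn
  set r := linfNorm b / μ with hr
  have hμr : linfNorm b = μ * r := by rw [hr]; field_simp
  have hr0 : 0 ≤ r := div_nonneg (linfNorm_nonneg b) hμ.le
  set S : Set (Fin n → ℝ) := {v | l1Norm v ≤ r} with hS
  have hSconv : Convex ℝ S := by
    intro x hx y hy a c ha hc hac
    simp only [hS, Set.mem_setOf_eq] at *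
    calc l1Norm (a • x + c • y) ≤ l1Norm (a • x) + l1Norm (c • y) := l1Norm_add_le _ _
      _ = |a| * l1Norm x + |c| * l1Norm y := by rw [l1Norm_smul, l1Norm_smul]
      _ = a * l1Norm x + c * l1Norm y := by rw [abs_of_nonneg ha, abs_of_nonneg hc]
      _ ≤ a * r + c * r :=
          add_le_add (mul_le_mul_of_nonneg_left hx ha) (mul_le_mul_of_nonneg_left hy hc)
      _ = r := by rw [← add_mul, hac, one_mul]
  have hScl : IsClosed S := isClosed_le continuous_l1Norm continuous_const
  have hSbd : Bornology.IsBounded S := by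
    refine (Metric.isBounded_closedBall (x := (0 : Fin n → ℝ)) (r := r)).subset ?_
    intro v hv
    rw [Metric.mem_closedBall, dist_zero_right, ← linfNorm_eq_norm]
    exact le_trans (linfNorm_le_l1Norm v) hv
  have hScomp : IsCompact S := Metric.isCompact_of_isClosed_isBounded hScl hSbd
  set K := A '' S with hK
  suffices hbK : b ∈ K by
    obtain ⟨v, hvS, hvA⟩ := hbK
    exact ⟨v, hvA, hvS⟩
  by_contra hbK
  have hKconv : Convex ℝ K := by
    have := hSconv.linear_image (A : (Fin n → ℝ) →ₗ[ℝ] (Fin m → ℝ))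
    simpa [hK] using this
  have hKcl : IsClosed K := (hScomp.image A.continuous).isClosed
  obtain ⟨f, c, hfK, hfb⟩ := geometric_hahn_banach_closed_point hKconv hKcl hbK
  set h : Fin m → ℝ := fun j => f (Pi.single j 1) with hdefh
  have hexp : ∀ y : Fin m → ℝ, f y = ∑ j, h j * y j := by
    intro y
    have hy : y = ∑ j, Pi.single j (y j) := (Finset.univ_sum_single y).symm
    rw [hy, map_sum]
    refine Finset.sum_congr rfl fun j _ => ?_
    have : Pi.single j (y j) = y j • (Pi.single j 1 : Fin m → ℝ) := by
      funext k
      rcases eq_or_ne k j with hk | hk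
      · subst hk; simp
      · simp [Pi.single_eq_of_ne hk]
    rw [this, map_smul]
    simp [hdefh, mul_comm]
  obtain ⟨i0, hi0⟩ := Finite.exists_max (fun i => |transposeApply A h i|)
  have hmax : linfNorm (transposeApply A h) = |transposeApply A h i0| := by
    refine le_antisymm (Real.iSup_le hi0 (abs_nonneg _)) (abs_le_linfNorm _ i0)
  set cc : ℝ := if 0 ≤ transposeApply A h i0 then r else -r with hcc
  set v : Fin n → ℝ := Pi.single i0 cc with hv
  have hvS : v ∈ S := by
    have : l1Norm v = |cc| := by
      rw [l1Norm, hv]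
      rw [Finset.sum_eq_single_of_mem i0 (Finset.mem_univ i0)
        (fun j _ hj => by simp [Pi.single_eq_of_ne hj])]
      simp
    have hcabs : |cc| = r := by
      rw [hcc]
      split_ifs <;> simp [abs_of_nonneg hr0, abs_of_nonpos (neg_nonpos.mpr hr0)]
    rw [hS]
    simp only [Set.mem_setOf_eq]
    rw [this, hcabs]
  have hAv : f (A v) = r * |transposeApply A h i0| := by
    have hv1 : v = cc • (Pi.single i0 1 : Fin n → ℝ) := by
      rw [hv]
      funext k
      rcases eq_or_ne k i0 with hk | hk
      · subst hk; simp
      · simp [Pi.single_eq_of_ne hk]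
    rw [hexp (A v), hv1, map_smul]
    have : ∑ j, h j * (cc • A (Pi.single i0 1)) j = cc * transposeApply A h i0 := by
      rw [transposeApply, Finset.mul_sum]
      refine Finset.sum_congr rfl fun j _ => ?_
      simp [Pi.smul_apply]
      ring
    rw [this, hcc]
    split_ifs with hsg
    · rw [abs_of_nonneg hsg]
    · rw [abs_of_neg (lt_of_not_ge hsg)]
      ring
  have hchain : f b ≤ f (A v) := by
    calc f b = ∑ j, h j * b j := hexp b
      _ ≤ l1Norm h * linfNorm b := pairing_le h b
      _ = μ * l1Norm h * r := by rw [hμr]; ring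
      _ ≤ linfNorm (transposeApply A h) * r :=
          mul_le_mul_of_nonneg_right (hA h) hr0
      _ = r * |transposeApply A h i0| := by rw [hmax]; ring
      _ = f (A v) := hAv.symm
  have hlt : f (A v) < c := hfK _ ⟨v, hvS, rfl⟩
  linarith

lemma taylor_bound {n m : ℕ} {P : (Fin n → ℝ) → (Fin m → ℝ)} (hP : ContDiff ℝ 1 P)
    {L : ℝ} {Bρ : Set (Fin n → ℝ)}
    (hLip : ∀ a ∈ Bρ, ∀ b ∈ Bρ, ∀ v : Fin n → ℝ,
      linfNorm ((fderiv ℝ P a - fderiv ℝ P b) v) ≤ L * l1Norm (a - b) * l1Norm v)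
    (a d : Fin n → ℝ) (hseg : ∀ t : ℝ, t ∈ Set.Icc (0:ℝ) 1 → a + t • d ∈ Bρ) :
    linfNorm (P (a + d) - P a - fderiv ℝ P a d) ≤ L / 2 * l1Norm d ^ 2 := by
  have hdiff : Differentiable ℝ P := hP.differentiable one_ne_zero
  set c : Fin m → ℝ := fderiv ℝ P a d with hc
  set g : ℝ → Fin m → ℝ := fun t => P (a + t • d) - P a - t • c with hg
  have hline : ∀ t : ℝ, HasDerivAt (fun t : ℝ => a + t • d) d t := by
    intro t
    simpa using ((hasDerivAt_id t).smul_const d).const_add a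
  have hgd : ∀ t : ℝ, HasDerivAt g (fderiv ℝ P (a + t • d) d - c) t := by
    intro t
    have h1 : HasDerivAt (fun t : ℝ => P (a + t • d)) (fderiv ℝ P (a + t • d) d) t :=
      (hdiff (a + t • d)).hasFDerivAt.comp_hasDerivAt t (hline t)
    have h2 : HasDerivAt (fun t : ℝ => t • c) c t := by
      simpa using (hasDerivAt_id t).smul_const c
    exact (h1.sub_const (P a)).sub h2
  set B : ℝ → ℝ := fun t => L / 2 * l1Norm d ^ 2 * t ^ 2 with hB
  have hBd : ∀ t : ℝ, HasDerivAt B (L * l1Norm d ^ 2 * t) t := by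
    intro t
    have := ((hasDerivAt_pow 2 t).const_mul (L / 2 * l1Norm d ^ 2))
    exact this.congr_deriv (by push_cast; ring)
  have key := image_norm_le_of_norm_deriv_right_le_deriv_boundary
    (f := g) (f' := fun t => fderiv ℝ P (a + t • d) d - c) (a := 0) (b := 1)
    (B := B) (B' := fun t => L * l1Norm d ^ 2 * t)
    (fun t _ => (hgd t).continuousAt.continuousWithinAt)
    (fun t _ => (hgd t).hasDerivWithinAt)
    (by simp [hg, hB]) (hBd)
    (fun t ht => by
      have hmem : a + t • d ∈ Bρ := hseg t ⟨ht.1, ht.2.le⟩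
      have hmem0 : a ∈ Bρ := by simpa using hseg 0 ⟨le_refl 0, zero_le_one⟩
      have h0 := hLip (a + t • d) hmem a hmem0 d
      have heq : (fderiv ℝ P (a + t • d) - fderiv ℝ P a) d
          = fderiv ℝ P (a + t • d) d - c := by simp [hc]
      rw [heq] at h0
      rw [← linfNorm_eq_norm]
      refine h0.trans ?_
      have : l1Norm (a + t • d - a) = t * l1Norm d := by
        have : a + t • d - a = t • d := by abel
        rw [this, l1Norm_smul, abs_of_nonneg ht.1]
      rw [this]
      show L * (t * l1Norm d) * l1Norm d ≤ L * l1Norm d ^ 2 * t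
      ring_nf
      exact le_refl _)
  have h1 := key (x := 1) ⟨zero_le_one, le_refl 1⟩
  rw [← linfNorm_eq_norm] at h1
  simpa [hg, hB] using h1

lemma l1Norm_neg {d : ℕ} (x : Fin d → ℝ) : l1Norm (-x) = l1Norm x := by
  simp [l1Norm]

lemma linfNorm_add_le {d : ℕ} (x y : Fin d → ℝ) :
    linfNorm (x + y) ≤ linfNorm x + linfNorm y := by
  rw [linfNorm_eq_norm, linfNorm_eq_norm, linfNorm_eq_norm]; exact norm_add_le x y

lemma linfNorm_smul {d : ℕ} (c : ℝ) (x : Fin d → ℝ) : linfNorm (c • x) = |c| * linfNorm x := by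
  rw [linfNorm_eq_norm, linfNorm_eq_norm, norm_smul, Real.norm_eq_abs]

lemma linfNorm_zero {d : ℕ} : linfNorm (0 : Fin d → ℝ) = 0 := by
  rw [linfNorm_eq_norm, norm_zero]

noncomputable def hfun (g : ℝ) : ℝ := g - min g 1 + (min g 1) ^ 2 / 2

lemma hfun_mono {a b : ℝ} (ha : 0 ≤ a) (hab : a ≤ b) : hfun a ≤ hfun b := by
  unfold hfun
  rcases le_total a 1 with h1 | h1 <;> rcases le_total b 1 with h2 | h2
  · rw [min_eq_left h1, min_eq_left h2]; nlinarith
  · rw [min_eq_left h1, min_eq_right h2]; nlinarith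
  · rw [min_eq_right h1, min_eq_left h2]; nlinarith
  · rw [min_eq_right h1, min_eq_right h2]; nlinarith

lemma convex_l1ball {d : ℕ} (u0 : Fin d → ℝ) (ρ : ℝ) :
    Convex ℝ {v : Fin d → ℝ | l1Norm (v - u0) ≤ ρ} := by
  intro p hp q hq a c ha hc hac
  simp only [Set.mem_setOf_eq] at *
  have h1 : a • u0 + c • u0 = u0 := by rw [← add_smul, hac, one_smul]
  have h2 : a • p + c • q - u0 = a • (p - u0) + c • (q - u0) := by
    conv_lhs => rw [← h1]
    rw [smul_sub, smul_sub]
    abel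
  rw [h2]
  calc l1Norm (a • (p - u0) + c • (q - u0))
      ≤ l1Norm (a • (p - u0)) + l1Norm (c • (q - u0)) := l1Norm_add_le _ _
    _ = a * l1Norm (p - u0) + c * l1Norm (q - u0) := by
        rw [l1Norm_smul, l1Norm_smul, abs_of_nonneg ha, abs_of_nonneg hc]
    _ ≤ a * ρ + c * ρ :=
        add_le_add (mul_le_mul_of_nonneg_left hp ha) (mul_le_mul_of_nonneg_left hq hc)
    _ = ρ := by rw [← add_mul, hac, one_mul]


lemma chainEq (L μ γk Fk : ℝ) (hμ : μ ≠ 0) :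
    L / μ ^ 2 * ((1 - γk) * Fk + L / 2 * (γk * (Fk / μ)) ^ 2)
      = L / μ ^ 2 * Fk - γk * (L / μ ^ 2 * Fk) + (γk * (L / μ ^ 2 * Fk)) ^ 2 / 2 := by
  field_simp


set_option maxHeartbeats 2000000 in
/-- bound on the number of damped iterations: for every damped
sparse-Newton sequence from `u⁰`, the step-size
`γ_k = min{1, μ²/(L‖P(uᵏ)‖_∞)}` equals `1` for all `k ≥ k_max`, where
`k_max = max{0, ⌈2Ls/μ²⌉ − 2}`. -/
theorem statement10 {n m : ℕ} (P : (Fin n → ℝ) → (Fin m → ℝ)) (hP : ContDiff ℝ 1 P)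
    (u0 : Fin n → ℝ) (s : ℝ) (hs : s = linfNorm (P u0)) (hspos : 0 < s)
    (ρ : ℝ) (hρ : 0 < ρ) (Bρ : Set (Fin n → ℝ)) (hB : Bρ = {v | l1Norm (v - u0) ≤ ρ})
    (μ : ℝ) (hμ : 0 < μ)
    (hA' : ∀ v ∈ Bρ, ∀ h : Fin m → ℝ,
      μ * l1Norm h ≤ linfNorm (transposeApply (fderiv ℝ P v) h))
    (L : ℝ) (hL : 0 < L)
    (hLip : ∀ a ∈ Bρ, ∀ b ∈ Bρ, ∀ v : Fin n → ℝ,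
      linfNorm ((fderiv ℝ P a - fderiv ℝ P b) v) ≤ L * l1Norm (a - b) * l1Norm v)
    (kmax : ℤ) (hkmax : kmax = max 0 (⌈2 * (L * s / μ ^ 2)⌉ - 2))
    (vbar : ℝ) (hvbar : vbar = L * s / μ ^ 2 - (kmax : ℝ) / 2)
    (hρbig : ρ ≥ μ / L * ((kmax : ℝ) + 2 * H0 (vbar / 2)))
    -- a damped sparse-Newton sequence from `u0`:
    (u w : ℕ → Fin n → ℝ) (γ : ℕ → ℝ) (hu0 : u 0 = u0)
    (hw_eq : ∀ k, fderiv ℝ P (u k) (w k) = P (u k))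
    (hw_min : ∀ k, ∀ v : Fin n → ℝ, fderiv ℝ P (u k) v = P (u k) →
      l1Norm (w k) ≤ l1Norm v)
    (hγ : ∀ k, γ k = if P (u k) = 0 then 1
      else min 1 (μ ^ 2 / (L * linfNorm (P (u k)))))
    (hstep : ∀ k, u (k + 1) = u k - γ k • w k) :
    ∀ k : ℕ, kmax ≤ (k : ℤ) → γ k = 1 := by
  have hμ2 : (0:ℝ) < μ ^ 2 := by positivity
  set x : ℝ := L * s / μ ^ 2 with hx
  have hx0 : 0 < x := div_pos (mul_pos hL hspos) hμ2
  have hk0 : (0:ℤ) ≤ kmax := by rw [hkmax]; exact le_max_left _ _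
  set K : ℕ := kmax.toNat with hKdef
  have hKcast : (K : ℝ) = (kmax : ℝ) := by
    rw [hKdef]
    exact_mod_cast congrArg (Int.cast : ℤ → ℝ) (Int.toNat_of_nonneg hk0)
  have hvbar' : vbar = x - (K : ℝ) / 2 := by rw [hvbar, hKcast]
  -- vbar ∈ (0, 1]
  have hvle1 : vbar ≤ 1 := by
    have h1 : (⌈2 * x⌉ : ℤ) - 2 ≤ kmax := by rw [hkmax]; exact le_max_right _ _
    have h2 : 2 * x ≤ (⌈2 * x⌉ : ℝ) := Int.le_ceil _
    have h3 : ((⌈2 * x⌉ : ℤ) : ℝ) - 2 ≤ (kmax : ℝ) := by exact_mod_cast h1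
    rw [hvbar]
    linarith
  have hvpos : 0 < vbar := by
    rcases max_choice 0 (⌈2 * (L * s / μ ^ 2)⌉ - 2) with hc | hc
    · rw [← hkmax] at hc
      rw [hvbar, hc]
      simpa using hx0
    · rw [← hkmax] at hc
      have h2 : ((⌈2 * x⌉ : ℤ) : ℝ) < 2 * x + 1 := Int.ceil_lt_add_one _
      have : (kmax : ℝ) < 2 * x - 1 := by
        rw [hc]; push_cast; linarith
      rw [hvbar]
      linarith
  have hvhalf : 1 ≤ K → 1 / 2 ≤ vbar := by
    intro hK1
    have hkm1 : (1:ℤ) ≤ kmax := by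
      rw [hKdef] at hK1; omega
    have hmax : kmax = ⌈2 * x⌉ - 2 := by
      rw [hkmax] at hkm1 ⊢
      omega
    have h2 : ((⌈2 * x⌉ : ℤ) : ℝ) < 2 * x + 1 := Int.ceil_lt_add_one _
    have : (kmax : ℝ) < 2 * x - 1 := by rw [hmax]; push_cast; linarith
    rw [hvbar]
    linarith
  set δ : ℝ := vbar / 2 with hδ
  have hδ0 : 0 < δ := by positivity
  have hδ1 : δ < 1 := by rw [hδ]; linarith
  have hsum : Summable (fun ℓ : ℕ => δ ^ (2 ^ ℓ)) := by
    refine Summable.of_nonneg_of_le (fun ℓ => by positivity)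
      (fun ℓ => pow_le_pow_of_le_one hδ0.le hδ1.le (Nat.lt_two_pow_self (n := ℓ)).le) ?_
    exact summable_geometric_of_lt_one hδ0.le hδ1
  -- sequence quantities
  set F : ℕ → ℝ := fun k => linfNorm (P (u k)) with hF
  set g : ℕ → ℝ := fun k => L / μ ^ 2 * F k with hg
  have hF0 : ∀ k, 0 ≤ F k := fun k => linfNorm_nonneg _
  have hg0 : ∀ k, 0 ≤ g k := fun k => mul_nonneg (by positivity) (hF0 k)
  -- φ and budget
  set φ : ℕ → ℝ := fun k => if k < K then x - (k : ℝ) / 2 else 2 * δ ^ (2 ^ (k - K)) with hφ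
  set Bd : ℕ → ℝ := fun k =>
    μ / L * ((min k K : ℕ) + 2 * ∑ ℓ ∈ Finset.range (k - K), δ ^ (2 ^ ℓ)) with hBd
  have hμL : (0:ℝ) ≤ μ / L := by positivity
  have hBdρ : ∀ k, Bd k ≤ ρ := by
    intro k
    refine le_trans ?_ hρbig
    rw [hBd]
    dsimp only
    have h1 : ((min k K : ℕ) : ℝ) ≤ (kmax : ℝ) := by
      rw [← hKcast]
      exact_mod_cast min_le_right k K
    have h2 : ∑ ℓ ∈ Finset.range (k - K), δ ^ (2 ^ ℓ) ≤ H0 δ :=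
      hsum.sum_le_tsum (Finset.range (k - K)) (fun i _ => by positivity)
    have : ((min k K : ℕ) : ℝ) + 2 * ∑ ℓ ∈ Finset.range (k - K), δ ^ (2 ^ ℓ)
        ≤ (kmax : ℝ) + 2 * H0 δ := by linarith
    exact mul_le_mul_of_nonneg_left this hμL
  -- φ properties
  have hφpow_le : ∀ ℓ : ℕ, δ ^ (2 ^ ℓ) ≤ δ :=
    fun ℓ => by
      calc δ ^ (2 ^ ℓ) ≤ δ ^ 1 := pow_le_pow_of_le_one hδ0.le hδ1.le Nat.one_le_two_pow
        _ = δ := pow_one δ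
  have hφ0 : ∀ k, 0 ≤ φ k := by
    intro k
    rw [hφ]
    dsimp only
    split_ifs with hk
    · have : (k : ℝ) + 1 ≤ (K : ℝ) := by exact_mod_cast hk
      rw [hvbar'] at hvpos
      linarith
    · positivity
  have hφle1 : ∀ k, K ≤ k → φ k ≤ 1 := by
    intro k hk
    rw [hφ]
    dsimp only
    rw [if_neg (by omega)]
    have := hφpow_le (k - K)
    rw [hδ] at *
    linarith
  have hconv : Convex ℝ Bρ := by rw [hB]; exact convex_l1ball u0 ρ
  -- step lemmas
  have w_bound : ∀ k, u k ∈ Bρ → l1Norm (w k) ≤ F k / μ := by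
    intro k hmem
    obtain ⟨v, hv1, hv2⟩ :=
      exists_l1_solution (fderiv ℝ P (u k)) hμ (fun h => hA' (u k) hmem h) (P (u k))
    exact (hw_min k v hv1).trans hv2
  have hwzero : ∀ k, P (u k) = 0 → w k = 0 := by
    intro k hPk
    refine l1Norm_eq_zero ?_
    have h0 : fderiv ℝ P (u k) 0 = P (u k) := by rw [hPk]; exact map_zero _
    have := hw_min k 0 h0
    simpa [l1Norm] using this
  have step_len : ∀ k, u k ∈ Bρ → l1Norm (u (k + 1) - u k) ≤ μ / L * min (g k) 1 := by
    intro k hmem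
    have hd : u (k + 1) - u k = -(γ k • w k) := by rw [hstep k]; abel
    rw [hd, l1Norm_neg, l1Norm_smul]
    by_cases hPk : P (u k) = 0
    · have : w k = 0 := hwzero k hPk
      rw [this]
      have : l1Norm (0 : Fin n → ℝ) = 0 := by simp [l1Norm]
      rw [this, mul_zero]
      have : 0 ≤ min (g k) 1 := le_min (hg0 k) zero_le_one
      positivity
    · have hFpos : 0 < F k := by
        obtain ⟨j, hj⟩ : ∃ j, P (u k) j ≠ 0 := by
          by_contra hc
          push_neg at hc
          exact hPk (funext hc)
        exact lt_of_lt_of_le (abs_pos.mpr hj) (abs_le_linfNorm _ j)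
      have hγval : γ k = min 1 (μ ^ 2 / (L * F k)) := by rw [hγ k, if_neg hPk]
      have hγ0 : 0 ≤ γ k := by
        rw [hγval]
        exact le_min zero_le_one (by positivity)
      rw [abs_of_nonneg hγ0]
      have hwb := w_bound k hmem
      have hstep1 : γ k * l1Norm (w k) ≤ γ k * (F k / μ) :=
        mul_le_mul_of_nonneg_left hwb hγ0
      refine hstep1.trans ?_
      rcases le_total (L * F k) (μ ^ 2) with hc | hc
      · have hgle : g k ≤ 1 := by
          rw [hg]
          dsimp only
          rw [div_mul_eq_mul_div, div_le_one hμ2]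
          linarith [hc]
        rw [min_eq_left hgle]
        have hγle : γ k ≤ 1 := by rw [hγval]; exact min_le_left _ _
        have : γ k * (F k / μ) ≤ 1 * (F k / μ) :=
          mul_le_mul_of_nonneg_right hγle (by positivity)
        refine this.trans (le_of_eq ?_)
        rw [one_mul, hg]
        dsimp only
        field_simp
      · have hgge : 1 ≤ g k := by
          rw [hg]
          dsimp only
          rw [div_mul_eq_mul_div, le_div_iff₀ hμ2]
          linarith [hc]
        rw [min_eq_right hgge, mul_one]
        have hγle : γ k ≤ μ ^ 2 / (L * F k) := by rw [hγval]; exact min_le_right _ _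
        have : γ k * (F k / μ) ≤ μ ^ 2 / (L * F k) * (F k / μ) :=
          mul_le_mul_of_nonneg_right hγle (by positivity)
        refine this.trans (le_of_eq ?_)
        field_simp
  have descent : ∀ k, u k ∈ Bρ → u (k + 1) ∈ Bρ → g (k + 1) ≤ hfun (g k) := by
    intro k hmk hmk1
    by_cases hPk : P (u k) = 0
    · have hw0 : w k = 0 := hwzero k hPk
      have hu1 : u (k + 1) = u k := by rw [hstep k, hw0]; simp
      have hgk : g k = 0 := by
        rw [hg, hF]
        dsimp only
        rw [hPk, linfNorm_zero, mul_zero]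
      have hgk1 : g (k + 1) = 0 := by
        rw [hg, hF]
        dsimp only
        rw [hu1, hPk, linfNorm_zero, mul_zero]
      rw [hgk, hgk1]
      norm_num [hfun]
    · have hFpos : 0 < F k := by
        obtain ⟨j, hj⟩ : ∃ j, P (u k) j ≠ 0 := by
          by_contra hc
          push_neg at hc
          exact hPk (funext hc)
        exact lt_of_lt_of_le (abs_pos.mpr hj) (abs_le_linfNorm _ j)
      have hgpos : 0 < g k := mul_pos (by positivity) hFpos
      have hγval : γ k = min 1 (μ ^ 2 / (L * F k)) := by rw [hγ k, if_neg hPk]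
      have hγ0 : 0 ≤ γ k := by
        rw [hγval]
        exact le_min zero_le_one (by positivity)
      have hγ1 : γ k ≤ 1 := by rw [hγval]; exact min_le_left _ _
      have hwb := w_bound k hmk
      set d : Fin n → ℝ := u (k + 1) - u k with hd
      have hdval : d = -(γ k • w k) := by rw [hd, hstep k]; abel
      have hl1d : l1Norm d ≤ γ k * (F k / μ) := by
        rw [hdval, l1Norm_neg, l1Norm_smul, abs_of_nonneg hγ0]
        exact mul_le_mul_of_nonneg_left hwb hγ0
      have hseg : ∀ t : ℝ, t ∈ Set.Icc (0:ℝ) 1 → u k + t • d ∈ Bρ := by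
        intro t ht
        have hmem := hconv hmk hmk1 (by linarith [ht.2] : (0:ℝ) ≤ 1 - t) ht.1 (by ring)
        have : u k + t • d = (1 - t) • u k + t • u (k + 1) := by
          rw [hd, smul_sub, sub_smul, one_smul]
          abel
        rw [this]
        exact hmem
      have htay := taylor_bound hP hLip (u k) d hseg
      have huk1 : u k + d = u (k + 1) := by rw [hd]; abel
      have hfd : fderiv ℝ P (u k) d = -(γ k • P (u k)) := by
        rw [hdval, map_neg, map_smul, hw_eq k]
      rw [huk1, hfd] at htay
      have hdecomp : P (u (k + 1)) =
          (P (u (k + 1)) - P (u k) - -(γ k • P (u k))) + (1 - γ k) • P (u k) := by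
        rw [sub_smul, one_smul]
        abel
      have hF1 : F (k + 1) ≤ (1 - γ k) * F k + L / 2 * l1Norm d ^ 2 := by
        calc F (k + 1) = linfNorm (P (u (k + 1))) := by rw [hF]
          _ ≤ linfNorm (P (u (k + 1)) - P (u k) - -(γ k • P (u k)))
              + linfNorm ((1 - γ k) • P (u k)) := by
                conv_lhs => rw [hdecomp]
                exact linfNorm_add_le _ _
          _ ≤ L / 2 * l1Norm d ^ 2 + (1 - γ k) * F k := by
                refine add_le_add htay (le_of_eq ?_)
                rw [linfNorm_smul, abs_of_nonneg (by linarith : (0:ℝ) ≤ 1 - γ k), hF]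
          _ = (1 - γ k) * F k + L / 2 * l1Norm d ^ 2 := by ring
      have hγg : γ k * g k = min (g k) 1 := by
        rw [hγval]
        rcases le_total (μ ^ 2 / (L * F k)) 1 with h | h
        · rw [min_eq_right h]
          have hg1 : 1 ≤ g k := by
            rw [hg]
            dsimp only
            rw [div_mul_eq_mul_div, le_div_iff₀ hμ2]
            have := (div_le_one (by positivity : (0:ℝ) < L * F k)).mp h
            linarith
          rw [min_eq_right hg1, hg]
          dsimp only
          field_simp
        · rw [min_eq_left h]
          have hgle : g k ≤ 1 := by
            rw [hg]
            dsimp only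
            rw [div_mul_eq_mul_div, div_le_one hμ2]
            have := (one_le_div (by positivity : (0:ℝ) < L * F k)).mp h
            linarith
          rw [min_eq_left hgle, one_mul]
      have hsq : l1Norm d ^ 2 ≤ (γ k * (F k / μ)) ^ 2 := by
        nlinarith [l1Norm_nonneg d]
      have hchain : g (k + 1) ≤ g k - γ k * g k + (γ k * g k) ^ 2 / 2 := by
        have h2 : F (k + 1) ≤ (1 - γ k) * F k + L / 2 * (γ k * (F k / μ)) ^ 2 := by
          have h5 : L / 2 * l1Norm d ^ 2 ≤ L / 2 * (γ k * (F k / μ)) ^ 2 :=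
            mul_le_mul_of_nonneg_left hsq (by positivity)
          linarith
        have h3 : L / μ ^ 2 * F (k + 1)
            ≤ L / μ ^ 2 * ((1 - γ k) * F k + L / 2 * (γ k * (F k / μ)) ^ 2) :=
          mul_le_mul_of_nonneg_left h2 (by positivity)
        have h4 := chainEq L μ (γ k) (F k) hμ.ne'
        rw [hg]
        dsimp only
        linarith
      unfold hfun
      rw [← hγg]
      exact hchain
  have hBdstep : ∀ k, Bd k + μ / L * min (φ k) 1 ≤ Bd (k + 1) := by
    intro k
    rcases lt_or_ge k K with hk | hk
    · have h1 : min k K = k := min_eq_left hk.le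
      have h2 : min (k + 1) K = k + 1 := min_eq_left hk
      have h3 : k - K = 0 := Nat.sub_eq_zero_of_le hk.le
      have h4 : k + 1 - K = 0 := Nat.sub_eq_zero_of_le hk
      rw [hBd]
      dsimp only
      rw [h1, h2, h3, h4]
      simp only [Finset.range_zero, Finset.sum_empty]
      push_cast
      nlinarith [mul_le_mul_of_nonneg_left (min_le_right (φ k) 1) hμL]
    · have h1 : min k K = K := min_eq_right hk
      have h2 : min (k + 1) K = K := min_eq_right (by omega)
      have h3 : k + 1 - K = (k - K) + 1 := by omega
      have hφk : φ k = 2 * δ ^ 2 ^ (k - K) := by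
        rw [hφ]; dsimp only; rw [if_neg (by omega)]
      have h5 : min (φ k) 1 ≤ 2 * δ ^ 2 ^ (k - K) := hφk ▸ min_le_left _ _
      rw [hBd]
      dsimp only
      rw [h1, h2, h3, Finset.sum_range_succ]
      nlinarith [mul_le_mul_of_nonneg_left h5 hμL]
  have hφstep : ∀ k, hfun (φ k) ≤ φ (k + 1) := by
    intro k
    rcases lt_or_ge k K with hk | hk
    · have hK1 : 1 ≤ K := by omega
      have hv2 := hvhalf hK1
      have hφk : φ k = x - (k : ℝ) / 2 := by rw [hφ]; dsimp only; rw [if_pos hk]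
      have hφk1 : φ (k + 1) = x - ((k : ℝ) + 1) / 2 := by
        rw [hφ]; dsimp only
        rcases lt_or_ge (k + 1) K with h | h
        · rw [if_pos h]; push_cast; ring
        · have hkK : k + 1 = K := by omega
          rw [if_neg (by omega)]
          have h6 : k + 1 - K = 0 := by omega
          rw [h6, pow_zero, pow_one, hδ]
          have h7 : ((k : ℝ) + 1) = (K : ℝ) := by exact_mod_cast congrArg (Nat.cast : ℕ → ℝ) hkK
          rw [h7, hvbar']
          ring
      have hage : 1 ≤ φ k := by
        rw [hφk]
        have h8 : (k : ℝ) + 1 ≤ (K : ℝ) := by exact_mod_cast hk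
        rw [hvbar'] at hv2
        linarith
      unfold hfun
      rw [min_eq_right hage, hφk, hφk1]
      linarith
    · have hφk : φ k = 2 * δ ^ 2 ^ (k - K) := by
        rw [hφ]; dsimp only; rw [if_neg (by omega)]
      have hφk1 : φ (k + 1) = 2 * δ ^ 2 ^ (k - K + 1) := by
        rw [hφ]; dsimp only; rw [if_neg (by omega)]
        have h3 : k + 1 - K = (k - K) + 1 := by omega
        rw [h3]
      have hle1 : φ k ≤ 1 := hφle1 k hk
      unfold hfun
      rw [min_eq_left hle1, hφk, hφk1]
      have hexp : 2 ^ (k - K + 1) = 2 ^ (k - K) + 2 ^ (k - K) := by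
        rw [pow_succ]; ring
      rw [hexp, pow_add]
      have : 2 * δ ^ 2 ^ (k - K) - 2 * δ ^ 2 ^ (k - K) + (2 * δ ^ 2 ^ (k - K)) ^ 2 / 2
          = 2 * (δ ^ 2 ^ (k - K) * δ ^ 2 ^ (k - K)) := by ring
      rw [this]
  have hInv : ∀ k, l1Norm (u k - u0) ≤ Bd k ∧ g k ≤ φ k := by
    intro k
    induction k with
    | zero =>
      constructor
      · rw [hu0]
        have h1 : l1Norm (u0 - u0) = 0 := by simp [l1Norm]
        rw [h1, hBd]
        dsimp only
        simp
      · have hg0eq : g 0 = x := by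
          rw [hg]; dsimp only; rw [hF]; dsimp only
          rw [hu0, ← hs, hx]
          ring
        rw [hg0eq, hφ]
        dsimp only
        rcases lt_or_ge 0 K with h | h
        · rw [if_pos h]; norm_num
        · have hK0 : K = 0 := by omega
          rw [if_neg (by omega), hK0]
          norm_num
          rw [hδ, hvbar', hK0]
          push_cast
          ring_nf
          exact le_refl _
    | succ k ih =>
      have hmk : u k ∈ Bρ := by rw [hB]; exact ih.1.trans (hBdρ k)
      have hsl := step_len k hmk
      have hminle : min (g k) 1 ≤ min (φ k) 1 := min_le_min ih.2 le_rfl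
      have hl1 : l1Norm (u (k + 1) - u0) ≤ Bd (k + 1) := by
        have htri : l1Norm (u (k + 1) - u0)
            ≤ l1Norm (u (k + 1) - u k) + l1Norm (u k - u0) := by
          have hsplit : u (k + 1) - u0 = (u (k + 1) - u k) + (u k - u0) := by abel
          rw [hsplit]
          exact l1Norm_add_le _ _
        have h2 : μ / L * min (g k) 1 ≤ μ / L * min (φ k) 1 :=
          mul_le_mul_of_nonneg_left hminle hμL
        linarith [hBdstep k, ih.1]
      have hmk1 : u (k + 1) ∈ Bρ := by rw [hB]; exact hl1.trans (hBdρ (k + 1))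
      exact ⟨hl1, (descent k hmk hmk1).trans ((hfun_mono (hg0 k) ih.2).trans (hφstep k))⟩
  intro k hk
  have hKk : K ≤ k := Int.toNat_le.mpr hk
  have hgk : g k ≤ 1 := (hInv k).2.trans (hφle1 k hKk)
  rw [hγ k]
  split_ifs with hPk
  · rfl
  · have hFpos : 0 < F k := by
      obtain ⟨j, hj⟩ : ∃ j, P (u k) j ≠ 0 := by
        by_contra hc
        push_neg at hc
        exact hPk (funext hc)
      exact lt_of_lt_of_le (abs_pos.mpr hj) (abs_le_linfNorm _ j)
    have h9 : 1 ≤ μ ^ 2 / (L * F k) := by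
      rw [le_div_iff₀ (by positivity)]
      rw [hg] at hgk
      dsimp only at hgk
      rw [div_mul_eq_mul_div, div_le_one hμ2] at hgk
      linarith
    rw [min_eq_left h9]
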